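/- The discrete Wigner representation reproduces the Born rule: for all matrices ρ, E : Matrix (ZMod d) (ZMod d) ℂ, trace(ρ * E) = Σ over u ∈ ZMod d × ZMod d of ((1/d) * trace(A_u * ρ)) * trace(A_u * E). -/

import Mathlib

open Matrix Complex

/-- ω = exp(2πi/d). -/
noncomputable def omegaC (d : ℕ) : ℂ := Complex.exp (2 * Real.pi * Complex.I / d)

/-- The clock matrix `Z`, with `Z x x = ω ^ x.val`. -/
noncomputable def Zmat (d : ℕ) : Matrix (ZMod d) (ZMod d) ℂ :=
  Matrix.diagonal (fun x => omegaC d ^ x.val)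

/-- The shift matrix `X`, with `X x y = 1` iff `x = y + 1`. -/
noncomputable def Xmat (d : ℕ) : Matrix (ZMod d) (ZMod d) ℂ :=
  Matrix.of fun x y => if x = y + 1 then 1 else 0

/-- The Heisenberg–Weyl operator `T_a`. -/
noncomputable def TW (d : ℕ) [NeZero d] (a : ZMod d × ZMod d) : Matrix (ZMod d) (ZMod d) ℂ :=
  omegaC d ^ ((-((2 : ZMod d)⁻¹ * a.1 * a.2)).val) • (Zmat d ^ a.1.val * Xmat d ^ a.2.val)

/-- The phase point operator at the origin, `A_0 = (1/d) • ∑ a, T_a`. -/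
noncomputable def Apoint0 (d : ℕ) [NeZero d] : Matrix (ZMod d) (ZMod d) ℂ :=
  (1 / (d : ℂ)) • ∑ a : ZMod d × ZMod d, TW d a

/-- The phase point operator `A_u = T_u * A_0 * T_uᴴ`. -/
noncomputable def Apoint (d : ℕ) [NeZero d] (u : ZMod d × ZMod d) : Matrix (ZMod d) (ZMod d) ℂ :=
  TW d u * Apoint0 d * (TW d u)ᴴ


lemma omegaC_prim (d : ℕ) [NeZero d] : IsPrimitiveRoot (omegaC d) d :=
  Complex.isPrimitiveRoot_exp d (NeZero.ne d)

lemma omegaC_pow_d (d : ℕ) [NeZero d] : omegaC d ^ d = 1 := (omegaC_prim d).pow_eq_one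

lemma omegaC_pow_mod (d : ℕ) [NeZero d] (n : ℕ) : omegaC d ^ (n % d) = omegaC d ^ n := by
  conv_rhs => rw [← Nat.mod_add_div n d, pow_add, pow_mul, omegaC_pow_d, one_pow, mul_one]

lemma omegaC_val_add (d : ℕ) [NeZero d] (a b : ZMod d) :
    omegaC d ^ (a + b).val = omegaC d ^ a.val * omegaC d ^ b.val := by
  rw [ZMod.val_add, omegaC_pow_mod, pow_add]

lemma omegaC_val_mul (d : ℕ) [NeZero d] (a b : ZMod d) :
    omegaC d ^ (a * b).val = (omegaC d ^ a.val) ^ b.val := by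
  rw [ZMod.val_mul, omegaC_pow_mod, pow_mul]

lemma omegaC_val_neg (d : ℕ) [NeZero d] (a : ZMod d) :
    omegaC d ^ ((-a).val) = (omegaC d ^ a.val)⁻¹ := by
  have h : omegaC d ^ a.val * omegaC d ^ ((-a).val) = 1 := by
    rw [← omegaC_val_add, add_neg_cancel, ZMod.val_zero, pow_zero]
  exact eq_inv_of_mul_eq_one_left (by rw [mul_comm] at h; exact h)

lemma omegaC_star (d : ℕ) [NeZero d] (k : ℕ) :
    star (omegaC d ^ k) = (omegaC d ^ k)⁻¹ := by
  have h : (starRingEnd ℂ) (omegaC d) = (omegaC d)⁻¹ := by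
    rw [omegaC, ← Complex.exp_conj, ← Complex.exp_neg]
    congr 1
    simp [map_div₀, Complex.conj_I, map_ofNat]
    ring
  calc star (omegaC d ^ k) = (star (omegaC d)) ^ k := star_pow _ _
    _ = (omegaC d ^ k)⁻¹ := by rw [show star (omegaC d) = (starRingEnd ℂ) (omegaC d) from rfl, h, inv_pow]

lemma orth (d : ℕ) [NeZero d] (z : ZMod d) :
    ∑ t : ZMod d, omegaC d ^ (t * z).val = if z = 0 then (d : ℂ) else 0 := by
  have hsum : ∑ t : ZMod d, omegaC d ^ (t * z).val
      = ∑ i ∈ Finset.range d, (omegaC d ^ z.val) ^ i := by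
    refine Finset.sum_nbij' (fun t => t.val) (fun i => (i : ZMod d)) ?_ ?_ ?_ ?_ ?_
    · intro t _; exact Finset.mem_range.mpr (ZMod.val_lt t)
    · intro i _; exact Finset.mem_univ _
    · intro t _; exact ZMod.natCast_rightInverse t
    · intro i hi; exact ZMod.val_cast_of_lt (Finset.mem_range.mp hi)
    · intro t _; rw [mul_comm t z, omegaC_val_mul]
  rw [hsum]
  by_cases hz : z = 0
  · simp [hz]
  · rw [if_neg hz]
    have hne : omegaC d ^ z.val ≠ 1 := by
      apply (omegaC_prim d).pow_ne_one_of_pos_of_lt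
      · exact (fun h => hz ((ZMod.val_eq_zero z).mp h))
      · exact ZMod.val_lt z
    rw [geom_sum_eq hne, ← pow_mul, mul_comm, pow_mul, omegaC_pow_d, one_pow, sub_self,
      zero_div]

lemma two_unit (d : ℕ) (hodd : Odd d) : IsUnit (2 : ZMod d) := by
  have := (ZMod.isUnit_iff_coprime 2 d).mpr (Nat.coprime_two_left.mpr hodd)
  simpa using this

lemma Xmat_pow_apply (d : ℕ) [NeZero d] (k : ℕ) (x y : ZMod d) :
    (Xmat d ^ k) x y = if x = y + (k : ZMod d) then 1 else 0 := by
  induction k generalizing x y with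
  | zero => simp [Matrix.one_apply, eq_comm]
  | succ k ih =>
    rw [pow_succ, Matrix.mul_apply]
    have : ∀ z : ZMod d, (Xmat d ^ k) x z * Xmat d z y
        = if z = y + 1 then (if x = (y + 1) + (k : ZMod d) then 1 else 0) else 0 := by
      intro z
      by_cases hz : z = y + 1
      · subst hz; rw [ih]; simp [Xmat]
      · simp [Xmat, hz]
    rw [Finset.sum_congr rfl (fun z _ => this z), Finset.sum_ite_eq' Finset.univ (y+1)]
    simp only [Finset.mem_univ, if_true]
    push_cast
    ring_nf
lemma TW_apply (d : ℕ) [NeZero d] (a : ZMod d × ZMod d) (x y : ZMod d) :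
    TW d a x y = omegaC d ^ ((-((2 : ZMod d)⁻¹ * a.1 * a.2)).val) *
      (omegaC d ^ ((a.1 * x).val) * if x = y + a.2 then 1 else 0) := by
  rw [TW, Matrix.smul_apply, smul_eq_mul]
  congr 1
  rw [Zmat, Matrix.diagonal_pow, Matrix.diagonal_mul, Xmat_pow_apply]
  rw [Pi.pow_apply, ← omegaC_val_mul, mul_comm x a.1, ZMod.natCast_val, ZMod.cast_id]

lemma Apoint0_apply (d : ℕ) [NeZero d] (hodd : Odd d) (x y : ZMod d) :
    Apoint0 d x y = if x + y = 0 then 1 else 0 := by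
  have h2 : (2 : ZMod d)⁻¹ * 2 = 1 := ZMod.inv_mul_of_unit _ (two_unit d hodd)
  have hdne : (d : ℂ) ≠ 0 := Nat.cast_ne_zero.mpr (NeZero.ne d)
  rw [Apoint0, Matrix.smul_apply, Matrix.sum_apply, smul_eq_mul]
  rw [Fintype.sum_prod_type]
  have hinner : ∀ a1 : ZMod d, ∑ a2 : ZMod d, TW d (a1, a2) x y
      = omegaC d ^ ((a1 * ((2 : ZMod d)⁻¹ * (x + y))).val) := by
    intro a1
    have hstep : ∀ a2 : ZMod d, TW d (a1, a2) x y
        = if a2 = x - y then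
            omegaC d ^ ((-((2 : ZMod d)⁻¹ * a1 * (x - y))).val) *
              omegaC d ^ ((a1 * x).val) else 0 := by
      intro a2
      rw [TW_apply]
      by_cases ha : a2 = x - y
      · subst ha
        have hx : x = y + (x - y) := by ring
        rw [if_pos hx, if_pos rfl, mul_one]
      · have : ¬ (x = y + a2) := fun h => ha (by rw [h]; ring)
        simp [this, ha]
    rw [Finset.sum_congr rfl (fun a2 _ => hstep a2), Finset.sum_ite_eq' Finset.univ (x - y)]
    simp only [Finset.mem_univ, if_true]
    have harg : -((2 : ZMod d)⁻¹ * a1 * (x - y)) + a1 * x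
        = a1 * ((2 : ZMod d)⁻¹ * (x + y)) := by linear_combination (-(a1 * x)) * h2
    rw [← omegaC_val_add, harg]
  rw [Finset.sum_congr rfl (fun a1 _ => hinner a1), orth]
  have hiff : ((2 : ZMod d)⁻¹ * (x + y) = 0) ↔ (x + y = 0) := by
    constructor
    · intro h
      have h3 : (2 : ZMod d) * ((2 : ZMod d)⁻¹ * (x + y)) = 0 := by rw [h, mul_zero]
      rwa [← mul_assoc, ZMod.mul_inv_of_unit _ (two_unit d hodd), one_mul] at h3
    · intro h; rw [h, mul_zero]
  by_cases hxy : x + y = 0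
  · rw [if_pos (hiff.mpr hxy), if_pos hxy, one_div, inv_mul_cancel₀ hdne]
  · rw [if_neg (fun h => hxy (hiff.mp h)), if_neg hxy, mul_zero]

lemma TW_mul_Apoint0 (d : ℕ) [NeZero d] (hodd : Odd d) (u : ZMod d × ZMod d) (x z : ZMod d) :
    (TW d u * Apoint0 d) x z = TW d u x (-z) := by
  rw [Matrix.mul_apply]
  have hstep : ∀ w : ZMod d, TW d u x w * Apoint0 d w z
      = if w = -z then TW d u x (-z) else 0 := by
    intro w
    rw [Apoint0_apply d hodd]
    by_cases hw : w = -z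
    · subst hw; simp
    · have h0 : ¬ (w + z = 0) := fun h => hw (eq_neg_of_add_eq_zero_left h)
      simp [h0, hw]
  rw [Finset.sum_congr rfl (fun w _ => hstep w), Finset.sum_ite_eq' Finset.univ (-z)]
  simp

lemma Apoint_apply (d : ℕ) [NeZero d] (hodd : Odd d) (u : ZMod d × ZMod d) (x y : ZMod d) :
    Apoint d u x y = if x + y = u.2 + u.2 then omegaC d ^ ((u.1 * (x - y)).val) else 0 := by
  have hωne : omegaC d ≠ 0 := Complex.exp_ne_zero _
  rw [Apoint, Matrix.mul_apply]
  have key : ∀ z : ZMod d, (TW d u * Apoint0 d) x z * (TW d u)ᴴ z y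
      = if z = y - u.2 then
          (if x + y = u.2 + u.2 then omegaC d ^ ((u.1 * (x - y)).val) else 0) else 0 := by
    intro z
    rw [TW_mul_Apoint0 d hodd, Matrix.conjTranspose_apply]
    by_cases hz : z = y - u.2
    · subst hz
      rw [if_pos rfl, TW_apply, TW_apply]
      have hy : y = (y - u.2) + u.2 := by ring
      rw [if_pos hy]
      by_cases hxy : x + y = u.2 + u.2
      · have hx : x = -(y - u.2) + u.2 := by linear_combination hxy
        rw [if_pos hx, if_pos hxy, mul_one, mul_one]
        rw [star_mul', omegaC_star, omegaC_star]
        have hval : u.1 * x + (-(u.1 * y)) = u.1 * (x - y) := by ring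
        rw [← hval, omegaC_val_add, omegaC_val_neg]
        have h1 : omegaC d ^ (((2 : ZMod d)⁻¹ * u.1 * u.2)).val ≠ 0 := pow_ne_zero _ hωne
        rw [mul_mul_mul_comm, mul_inv_cancel₀ (inv_ne_zero h1), one_mul, omegaC_val_neg]
      · have hx : ¬ (x = -(y - u.2) + u.2) := fun h => hxy (by rw [h]; ring)
        rw [if_neg hx, if_neg hxy]
        simp
    · rw [if_neg hz]
      have hy : ¬ (y = z + u.2) := fun h => hz (by rw [h]; ring)
      have h0 : TW d u y z = 0 := by rw [TW_apply]; simp [hy]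
      rw [h0, star_zero, mul_zero]
  rw [Finset.sum_congr rfl (fun z _ => key z), Finset.sum_ite_eq' Finset.univ (y - u.2)]
  simp

lemma trace_Apoint_mul (d : ℕ) [NeZero d] (hodd : Odd d) (u : ZMod d × ZMod d)
    (M : Matrix (ZMod d) (ZMod d) ℂ) :
    (Apoint d u * M).trace
      = ∑ p : ZMod d, omegaC d ^ ((u.1 * (p - (u.2 + u.2 - p))).val) * M (u.2 + u.2 - p) p := by
  have h0 : (Apoint d u * M).trace = ∑ p : ZMod d, ∑ q : ZMod d, Apoint d u p q * M q p := by
    simp [Matrix.trace, Matrix.mul_apply, Matrix.diag]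
  rw [h0]
  refine Finset.sum_congr rfl (fun p _ => ?_)
  have step : ∀ q : ZMod d, Apoint d u p q * M q p
      = if q = u.2 + u.2 - p then
          omegaC d ^ ((u.1 * (p - (u.2 + u.2 - p))).val) * M (u.2 + u.2 - p) p else 0 := by
    intro q
    rw [Apoint_apply d hodd]
    by_cases hq : q = u.2 + u.2 - p
    · subst hq
      rw [if_pos (by ring), if_pos rfl]
    · have : ¬ (p + q = u.2 + u.2) := fun h => hq (by rw [← h]; ring)
      simp [this, hq]
  rw [Finset.sum_congr rfl (fun q _ => step q), Finset.sum_ite_eq' Finset.univ (u.2 + u.2 - p)]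
  simp

lemma recon (d : ℕ) [NeZero d] (hodd : Odd d) (ρ : Matrix (ZMod d) (ZMod d) ℂ) :
    ∑ u : ZMod d × ZMod d, ((1 / (d : ℂ)) * (Apoint d u * ρ).trace) • Apoint d u = ρ := by
  have h2 : IsUnit (2 : ZMod d) := two_unit d hodd
  have h2i : (2 : ZMod d)⁻¹ * 2 = 1 := ZMod.inv_mul_of_unit _ h2
  have hdne : (d : ℂ) ≠ 0 := Nat.cast_ne_zero.mpr (NeZero.ne d)
  ext x y
  rw [Matrix.sum_apply]
  set s2 : ZMod d := (2 : ZMod d)⁻¹ * (x + y) with hs2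
  have hs : s2 + s2 = x + y := by rw [hs2]; linear_combination (x + y) * h2i
  rw [Fintype.sum_prod_type]
  have inner : ∀ u1 : ZMod d,
      (∑ u2 : ZMod d, (((1 / (d : ℂ)) * (Apoint d (u1, u2) * ρ).trace) • Apoint d (u1, u2)) x y)
      = ((1 / (d : ℂ)) * ∑ p : ZMod d,
          omegaC d ^ ((u1 * (p - (x + y - p))).val) * ρ (x + y - p) p)
        * omegaC d ^ ((u1 * (x - y)).val) := by
    intro u1
    have step : ∀ u2 : ZMod d,
        (((1 / (d : ℂ)) * (Apoint d (u1, u2) * ρ).trace) • Apoint d (u1, u2)) x y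
        = if u2 = s2 then ((1 / (d : ℂ)) * ∑ p : ZMod d,
            omegaC d ^ ((u1 * (p - (x + y - p))).val) * ρ (x + y - p) p)
            * omegaC d ^ ((u1 * (x - y)).val) else 0 := by
      intro u2
      rw [Matrix.smul_apply, smul_eq_mul, Apoint_apply d hodd]
      by_cases hu : u2 = s2
      · subst hu
        rw [if_pos rfl, if_pos hs.symm, trace_Apoint_mul d hodd]
        simp only [hs]
      · have hcond : ¬ (x + y = (u1, u2).2 + (u1, u2).2) := by
          intro h
          apply hu
          have h4 : (2 : ZMod d) * u2 = (2 : ZMod d) * s2 := by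
            rw [two_mul, two_mul, ← h, hs]
          have := congrArg (fun t => (2 : ZMod d)⁻¹ * t) h4
          simpa [← mul_assoc, h2i] using this
        rw [if_neg hcond, mul_zero, if_neg hu]
    rw [Finset.sum_congr rfl (fun u2 _ => step u2), Finset.sum_ite_eq' Finset.univ s2]
    simp
  rw [Finset.sum_congr rfl (fun u1 _ => inner u1)]
  have combine : ∀ u1 p : ZMod d,
      omegaC d ^ ((u1 * (p - (x + y - p))).val) * ρ (x + y - p) p
        * omegaC d ^ ((u1 * (x - y)).val)
      = ρ (x + y - p) p * omegaC d ^ ((u1 * ((p - y) + (p - y))).val) := by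
    intro u1 p
    have harg : u1 * (p - (x + y - p)) + u1 * (x - y) = u1 * ((p - y) + (p - y)) := by ring
    calc omegaC d ^ ((u1 * (p - (x + y - p))).val) * ρ (x + y - p) p
          * omegaC d ^ ((u1 * (x - y)).val)
        = ρ (x + y - p) p * (omegaC d ^ ((u1 * (p - (x + y - p))).val)
            * omegaC d ^ ((u1 * (x - y)).val)) := by ring
      _ = ρ (x + y - p) p * omegaC d ^ ((u1 * ((p - y) + (p - y))).val) := by
          rw [← omegaC_val_add, harg]
  calc ∑ u1 : ZMod d, ((1 / (d : ℂ)) * ∑ p : ZMod d,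
          omegaC d ^ ((u1 * (p - (x + y - p))).val) * ρ (x + y - p) p)
        * omegaC d ^ ((u1 * (x - y)).val)
      = (1 / (d : ℂ)) * ∑ p : ZMod d, ∑ u1 : ZMod d,
          ρ (x + y - p) p * omegaC d ^ ((u1 * ((p - y) + (p - y))).val) := by
        have e1 : ∀ u1 : ZMod d,
            ((1 / (d : ℂ)) * ∑ p : ZMod d,
              omegaC d ^ ((u1 * (p - (x + y - p))).val) * ρ (x + y - p) p)
              * omegaC d ^ ((u1 * (x - y)).val)
            = (1 / (d : ℂ)) * ∑ p : ZMod d,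
                ρ (x + y - p) p * omegaC d ^ ((u1 * ((p - y) + (p - y))).val) := by
          intro u1
          rw [mul_assoc, Finset.sum_mul]
          congr 1
          exact Finset.sum_congr rfl (fun p _ => combine u1 p)
        rw [Finset.sum_congr rfl (fun u1 _ => e1 u1), ← Finset.mul_sum, Finset.sum_comm]
    _ = (1 / (d : ℂ)) * ∑ p : ZMod d,
          ρ (x + y - p) p * (if (p - y) + (p - y) = 0 then (d : ℂ) else 0) := by
        refine congrArg _ (Finset.sum_congr rfl (fun p _ => ?_))
        rw [← Finset.mul_sum, orth]
    _ = ρ x y := by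
        have hcoll : ∀ p : ZMod d,
            ρ (x + y - p) p * (if (p - y) + (p - y) = 0 then (d : ℂ) else 0)
            = if p = y then ρ x y * (d : ℂ) else 0 := by
          intro p
          by_cases hp : p = y
          · subst hp
            rw [if_pos (by ring), if_pos rfl]
            congr 2
            ring
          · have : ¬ ((p - y) + (p - y) = 0) := by
              intro h
              apply hp
              have h4 : (2 : ZMod d) * (p - y) = 0 := by rw [two_mul]; exact h
              have h5 : (2 : ZMod d)⁻¹ * ((2 : ZMod d) * (p - y)) = (2 : ZMod d)⁻¹ * 0 := by
                rw [h4]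
              rw [← mul_assoc, h2i, one_mul, mul_zero] at h5
              exact sub_eq_zero.mp h5
            simp [this, hp]
        rw [Finset.sum_congr rfl (fun p _ => hcoll p), Finset.sum_ite_eq' Finset.univ y]
        simp only [Finset.mem_univ, if_true]
        field_simp


/-- The discrete Wigner representation reproduces the Born rule. -/
theorem wigner_born_rule (d : ℕ) [NeZero d] (hodd : Odd d) (hd : 1 < d)
    (ρ E : Matrix (ZMod d) (ZMod d) ℂ) :
    (ρ * E).trace =
      ∑ u : ZMod d × ZMod d,
        ((1 / (d : ℂ)) * (Apoint d u * ρ).trace) * (Apoint d u * E).trace := by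
  conv_lhs => rw [← recon d hodd ρ]
  rw [Matrix.sum_mul, Matrix.trace_sum]
  refine Finset.sum_congr rfl (fun u _ => ?_)
  rw [smul_mul_assoc, Matrix.trace_smul, smul_eq_mul]
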